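/- Let α be a prime number. For every integer n ≥ 0, ∑_{k=2}^{n+2} S^{(2)}_{n+2,k} · μ(α·k) = ∑_{j ≥ 0} ( p(n+1-α^j) - p(n+2-α^{j+1}) ), where p(m) = 0 for m < 0 and the sum is finite since only finitely many terms are nonzero. -/

import Mathlib

open Finset

/-- The number of partitions of `n`. -/
def p (n : ℕ) : ℕ := Fintype.card (Nat.Partition n)

/-- The partition function extended by zero to negative integer arguments. -/
def pz (m : ℤ) : ℤ := if 0 ≤ m then (p m.toNat : ℤ) else 0

/-- `S r n k` : the total number of parts equal to `k` in all partitions of `n`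
whose parts are all at least `r`. -/
def S (r n k : ℕ) : ℕ :=
  ∑ P : Nat.Partition n, if ∀ i ∈ P.parts, r ≤ i then P.parts.count k else 0

def q (N : ℕ) : ℕ := Fintype.card {P : Nat.Partition N // ∀ i ∈ P.parts, 2 ≤ i}

theorem one_mem_of_not (M : ℕ) (P : Nat.Partition M) (h : ¬ ∀ i ∈ P.parts, 2 ≤ i) :
    (1 : ℕ) ∈ P.parts := by
  push_neg at h
  obtain ⟨i, hi, hi2⟩ := h
  have := P.parts_pos hi
  interval_cases i
  exact hi

theorem p_succ (M : ℕ) : p (M + 1) = q (M + 1) + p M := by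
  classical
  have h1 : p M = Fintype.card {P : Nat.Partition (M+1) // ¬ ∀ i ∈ P.parts, 2 ≤ i} := by
    apply Fintype.card_congr
    refine ⟨fun P => ⟨⟨1 ::ₘ P.parts, ?_, by simp [P.parts_sum, add_comm]⟩, ?_⟩,
      fun P => ⟨P.1.parts.erase 1, ?_, ?_⟩, ?_, ?_⟩
    · intro i hi
      rcases Multiset.mem_cons.mp hi with h | h
      · simp [h]
      · exact P.parts_pos h
    · push_neg
      exact ⟨1, Multiset.mem_cons_self _ _, by norm_num⟩
    · intro i hi
      exact P.1.parts_pos (Multiset.mem_of_mem_erase hi)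
    · have h1 : (1 : ℕ) ∈ P.1.parts := one_mem_of_not _ _ P.2
      have h2 := P.1.parts_sum
      have h3 := Multiset.sum_erase h1
      omega
    · intro P
      ext1
      simp
    · intro P
      ext1
      ext1
      simpa using Multiset.cons_erase (one_mem_of_not _ _ P.2)
  have hc : p (M+1) = q (M+1) + Fintype.card {P : Nat.Partition (M+1) // ¬ ∀ i ∈ P.parts, 2 ≤ i} := by
    rw [p, q, ← Fintype.card_sum]
    exact (Fintype.card_congr (Equiv.sumCompl _)).symm
  rw [hc, h1]

theorem multiset_sum_le {s t : Multiset ℕ} (h : s ≤ t) : s.sum ≤ t.sum := by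
  obtain ⟨u, rfl⟩ := Multiset.le_iff_exists_add.mp h
  simp

theorem cardA (N k m : ℕ) (hk : 2 ≤ k) (hm : m * k ≤ N) :
    Fintype.card {P : Nat.Partition N // (∀ i ∈ P.parts, 2 ≤ i) ∧ m ≤ P.parts.count k} =
      q (N - m * k) := by
  classical
  apply Fintype.card_congr
  refine ⟨fun P => ⟨⟨P.1.parts - Multiset.replicate m k, ?_, ?_⟩, ?_⟩,
    fun P => ⟨⟨P.1.parts + Multiset.replicate m k, ?_, ?_⟩, ?_, ?_⟩, ?_, ?_⟩
  · intro i hi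
    exact P.1.parts_pos (Multiset.mem_of_le (Multiset.sub_le_self _ _) hi)
  · have hle : Multiset.replicate m k ≤ P.1.parts :=
      Multiset.le_count_iff_replicate_le.mp P.2.2
    have h1 : (P.1.parts - Multiset.replicate m k) + Multiset.replicate m k = P.1.parts :=
      tsub_add_cancel_of_le hle
    have h2 := congrArg Multiset.sum h1
    rw [Multiset.sum_add, Multiset.sum_replicate, smul_eq_mul, P.1.parts_sum] at h2
    omega
  · intro i hi
    exact P.2.1 i (Multiset.mem_of_le (Multiset.sub_le_self _ _) hi)
  · intro i hi
    rcases Multiset.mem_add.mp hi with h | h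
    · exact P.1.parts_pos h
    · rw [Multiset.eq_of_mem_replicate h]; omega
  · rw [Multiset.sum_add, Multiset.sum_replicate, smul_eq_mul, P.1.parts_sum]
    omega
  · intro i hi
    rcases Multiset.mem_add.mp hi with h | h
    · exact P.2 i h
    · rw [Multiset.eq_of_mem_replicate h]; omega
  · rw [Multiset.count_add, Multiset.count_replicate_self]
    omega
  · intro P
    ext1
    ext1
    simp only
    exact tsub_add_cancel_of_le (Multiset.le_count_iff_replicate_le.mp P.2.2)
  · intro P
    ext1
    ext1
    simp only
    exact add_tsub_cancel_right _ _

theorem helper_sum (N c : ℕ) (hc : c ≤ N) :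
    ∑ m ∈ Icc 1 N, (if m ≤ c then (1:ℕ) else 0) = c := by
  rw [Finset.sum_ite, Finset.sum_const, Finset.sum_const, smul_eq_mul, mul_one, smul_eq_mul,
    mul_zero, add_zero]
  have h : (Icc 1 N).filter (fun m => m ≤ c) = Icc 1 c := by
    ext x
    simp only [mem_filter, mem_Icc]
    omega
  rw [h, Nat.card_Icc]
  omega

theorem S_eq (N k : ℕ) (hk : 2 ≤ k) :
    S 2 N k = ∑ m ∈ Icc 1 N, (if m * k ≤ N then q (N - m * k) else 0) := by
  classical
  have key : ∀ P : Nat.Partition N, (if ∀ i ∈ P.parts, 2 ≤ i then P.parts.count k else 0)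
      = ∑ m ∈ Icc 1 N, (if (∀ i ∈ P.parts, 2 ≤ i) ∧ m ≤ P.parts.count k then 1 else 0) := by
    intro P
    by_cases h : ∀ i ∈ P.parts, 2 ≤ i
    · have hsc : (∑ m ∈ Icc 1 N, if (∀ i ∈ P.parts, 2 ≤ i) ∧ m ≤ P.parts.count k then (1:ℕ) else 0)
           = ∑ m ∈ Icc 1 N, if m ≤ P.parts.count k then 1 else 0 :=
        Finset.sum_congr rfl (fun m _ => by rw [if_congr (and_iff_right h) rfl rfl])
      rw [if_pos h, hsc]
      have hcount : P.parts.count k ≤ N := by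
        have hle : Multiset.replicate (P.parts.count k) k ≤ P.parts :=
          Multiset.le_count_iff_replicate_le.mp le_rfl
        have h1 := multiset_sum_le hle
        rw [Multiset.sum_replicate, smul_eq_mul, P.parts_sum] at h1
        have h2 : P.parts.count k ≤ P.parts.count k * k :=
          Nat.le_mul_of_pos_right _ (by omega)
        omega
      exact (helper_sum N _ hcount).symm
    · simp only [h, false_and, if_false, Finset.sum_const_zero]
  rw [S]
  simp_rw [key]
  rw [Finset.sum_comm]
  apply Finset.sum_congr rfl
  intro m _
  by_cases hmk : m * k ≤ N
  · rw [if_pos hmk]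
    have hc := cardA N k m hk hmk
    rw [Fintype.card_subtype] at hc
    rw [← hc]
    rw [Finset.sum_ite, Finset.sum_const, Finset.sum_const, smul_eq_mul, mul_one, smul_eq_mul,
      mul_zero, add_zero]
  · rw [if_neg hmk]
    apply Finset.sum_eq_zero
    intro P _
    rw [if_neg]
    rintro ⟨h2, hm⟩
    have hle : Multiset.replicate m k ≤ P.parts := Multiset.le_count_iff_replicate_le.mp hm
    have h1 := multiset_sum_le hle
    rw [Multiset.sum_replicate, smul_eq_mul, P.parts_sum] at h1
    omega

open scoped Classical in
open ArithmeticFunction ArithmeticFunction.Moebius in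
theorem moebius_div_sum (α : ℕ) (hα : α.Prime) (s : ℕ) (hs : s ≠ 0) :
    ∑ k ∈ s.divisors, (ArithmeticFunction.moebius (α * k) : ℤ) =
      if ∃ a, s = α ^ a then -1 else 0 := by
  classical
  set a := s.factorization α with ha
  set t := s / α ^ a with ht
  have hst : α ^ a * t = s := Nat.ordProj_mul_ordCompl_eq_self s α
  have htdvd : t ∣ s := ⟨α ^ a, by rw [← hst]; ring⟩
  have ht0 : t ≠ 0 := by
    intro h
    rw [h, mul_zero] at hst
    exact hs hst.symm
  have hnd : ¬ α ∣ t := Nat.not_dvd_ordCompl hα hs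
  have hcop : Nat.Coprime α t := (Nat.Prime.coprime_iff_not_dvd hα).mpr hnd
  have hsub : t.divisors ⊆ s.divisors := Nat.divisors_subset_of_dvd hs htdvd
  rw [← Finset.sum_subset hsub ?_]
  · have hstep : ∀ k ∈ t.divisors, (μ (α * k) : ℤ) = -μ k := by
      intro k hk
      have hkt : k ∣ t := (Nat.mem_divisors.mp hk).1
      have hck : Nat.Coprime α k := Nat.Coprime.coprime_dvd_right hkt hcop
      rw [isMultiplicative_moebius.map_mul_of_coprime hck, moebius_apply_prime hα]
      ring
    rw [Finset.sum_congr rfl hstep, Finset.sum_neg_distrib]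
    have hmz : ∑ k ∈ t.divisors, (μ k : ℤ) = if t = 1 then 1 else 0 := by
      have h0 := congrArg (fun f => f t) moebius_mul_coe_zeta
      simp only [coe_mul_zeta_apply, one_apply] at h0
      exact h0
    rw [hmz]
    have hiff : t = 1 ↔ ∃ b, s = α ^ b := by
      constructor
      · intro h
        exact ⟨a, by rw [← hst, h, mul_one]⟩
      · rintro ⟨b, rfl⟩
        have : (α ^ b).factorization α = b := by
          simp [Nat.Prime.factorization_pow hα]
        rw [ht, ha, this, Nat.div_self (pow_pos hα.pos b)]
    by_cases h : t = 1
    · rw [if_pos h, if_pos (hiff.mp h)]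
    · rw [if_neg h, if_neg (fun hb => h (hiff.mpr hb))]; ring
  · intro k hks hkt
    have hk : k ∣ s := (Nat.mem_divisors.mp hks).1
    have hak : α ∣ k := by
      by_contra hna
      have hck : Nat.Coprime k (α ^ a) :=
        Nat.Coprime.pow_right _ (Nat.coprime_comm.mp ((Nat.Prime.coprime_iff_not_dvd hα).mpr hna))
      have : k ∣ t := (Nat.Coprime.dvd_of_dvd_mul_left hck (by rw [hst]; exact hk))
      exact hkt (Nat.mem_divisors.mpr ⟨this, ht0⟩)
    have : ¬ Squarefree (α * k) := by
      obtain ⟨j, rfl⟩ := hak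
      intro hsq
      have := hsq α (by ring_nf; exact ⟨j, by ring⟩)
      rw [Nat.isUnit_iff] at this
      exact hα.ne_one this
    exact moebius_eq_zero_of_not_squarefree this

theorem p_zero : p 0 = 1 := Fintype.card_unique

theorem q_zero : q 0 = 1 := by
  rw [q]
  have h : ∀ P : Nat.Partition 0, ∀ i ∈ P.parts, 2 ≤ i := by
    intro P i hi
    simp [Nat.Partition.partition_zero_parts] at hi
  rw [Fintype.card_congr (Equiv.subtypeUnivEquiv h)]
  exact p_zero

theorem p_eq_sum_range (M : ℕ) : p M = ∑ i ∈ range (M + 1), q i := by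
  induction M with
  | zero => simp [p_zero, q_zero]
  | succ M ih => rw [Finset.sum_range_succ, ← ih, p_succ, add_comm]

/-- key pz difference identity -/

theorem pz_sub (x : ℕ) : pz (x : ℤ) - pz ((x : ℤ) - 1) = (q x : ℤ) := by
  cases x with
  | zero =>
    simp only [Nat.cast_zero, pz, q_zero]
    norm_num [p_zero]
  | succ M =>
    have h1 : pz ((M + 1 : ℕ) : ℤ) = (p (M + 1) : ℤ) := by
      rw [pz, if_pos (by positivity)]
      norm_num
    have h2 : pz (((M + 1 : ℕ) : ℤ) - 1) = (p M : ℤ) := by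
      have : ((M + 1 : ℕ) : ℤ) - 1 = (M : ℤ) := by push_cast; ring
      rw [this]
      simp [pz]
    rw [h1, h2]
    have := p_succ M
    push_cast [this]
    ring

open ArithmeticFunction ArithmeticFunction.Moebius in
theorem sum_S2_moebius_prime_mul (α : ℕ) (hα : α.Prime) (n : ℕ) :
    ∑ k ∈ Finset.Icc 2 (n + 2),
        (S 2 (n + 2) k : ℤ) * ArithmeticFunction.moebius (α * k) =
      ∑ j ∈ Finset.range (n + 2),
        (pz ((n : ℤ) + 1 - (α : ℤ) ^ j) - pz ((n : ℤ) + 2 - (α : ℤ) ^ (j + 1))) := by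
  classical
  have hα2 : 2 ≤ α := hα.two_le
  set N := n + 2 with hNdef
  set T : ℤ := ∑ j ∈ Icc 1 (n+1), (if α ^ j ≤ N then (q (N - α ^ j) : ℤ) else 0) with hT
  -- LHS computation
  have hLHS : ∑ k ∈ Finset.Icc 2 N, (S 2 N k : ℤ) * μ (α * k) = (p n : ℤ) - T := by
    have step1 : ∑ k ∈ Finset.Icc 2 N, (S 2 N k : ℤ) * μ (α * k)
        = ∑ k ∈ Icc 2 N, ∑ m ∈ Icc 1 N,
            (if m * k ≤ N then (q (N - m * k) : ℤ) * μ (α * k) else 0) := by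
      apply Finset.sum_congr rfl
      intro k hk
      rw [S_eq N k (mem_Icc.mp hk).1]
      push_cast
      rw [Finset.sum_mul]
      apply Finset.sum_congr rfl
      intro m _
      split_ifs with h
      · ring
      · ring
    have step2 : ∑ x ∈ (Icc 2 N ×ˢ Icc 1 N).filter (fun x => x.2 * x.1 ≤ N),
          (q (N - x.2 * x.1) : ℤ) * μ (α * x.1)
        = ∑ k ∈ Icc 2 N, ∑ m ∈ Icc 1 N,
            (if m * k ≤ N then (q (N - m * k) : ℤ) * μ (α * k) else 0) := by
      rw [Finset.sum_filter, Finset.sum_product]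
    have step3 : ∑ x ∈ (Icc 2 N ×ˢ Icc 1 N).filter (fun x => x.2 * x.1 ≤ N),
          (q (N - x.2 * x.1) : ℤ) * μ (α * x.1)
        = ∑ y ∈ (Icc 2 N).sigma (fun s => s.divisors.filter (fun k => 2 ≤ k)),
            (q (N - y.1) : ℤ) * μ (α * y.2) := by
      apply Finset.sum_bij' (i := fun x _ => (⟨x.2 * x.1, x.1⟩ : (_ : ℕ) × ℕ))
        (j := fun y _ => (y.2, y.1 / y.2))
      · intro x hx
        simp only [mem_filter, mem_product, mem_Icc] at hx
        obtain ⟨⟨⟨hk2, hkN⟩, hm1, hmN⟩, hmk⟩ := hx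
        simp only [mem_sigma, mem_Icc, mem_filter, Nat.mem_divisors]
        refine ⟨⟨?_, hmk⟩, ⟨⟨x.2, mul_comm _ _⟩, by positivity⟩, hk2⟩
        calc 2 ≤ x.1 := hk2
        _ = 1 * x.1 := (one_mul _).symm
        _ ≤ x.2 * x.1 := Nat.mul_le_mul_right _ hm1
      · intro y hy
        simp only [mem_sigma, mem_Icc, mem_filter, Nat.mem_divisors] at hy
        obtain ⟨⟨hs2, hsN⟩, ⟨hdvd, hs0⟩, hk2⟩ := hy
        have hkle : y.2 ≤ y.1 := Nat.le_of_dvd (by omega) hdvd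
        have hdiv1 : 1 ≤ y.1 / y.2 := (Nat.one_le_div_iff (by omega)).mpr hkle
        simp only [mem_filter, mem_product, mem_Icc]
        refine ⟨⟨⟨hk2, by omega⟩, hdiv1, le_trans (Nat.div_le_self _ _) hsN⟩, ?_⟩
        rw [Nat.div_mul_cancel hdvd]
        exact hsN
      · intro x hx
        simp only [mem_filter, mem_product, mem_Icc] at hx
        have : x.2 * x.1 / x.1 = x.2 := Nat.mul_div_cancel _ (by omega)
        simp [this]
      · intro y hy
        simp only [mem_sigma, mem_Icc, mem_filter, Nat.mem_divisors] at hy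
        have : y.1 / y.2 * y.2 = y.1 := Nat.div_mul_cancel hy.2.1.1
        simp [this]
      · intro x hx
        rfl
    have step4 : ∀ s ∈ Icc 2 N, ∑ k ∈ s.divisors.filter (fun k => 2 ≤ k), (μ (α * k) : ℤ)
        = (if ∃ a, s = α ^ a then (-1 : ℤ) else 0) + 1 := by
      intro s hs
      obtain ⟨hs2, hsN⟩ := mem_Icc.mp hs
      have hs0 : s ≠ 0 := by omega
      have hfe : s.divisors.filter (fun k => 2 ≤ k) = s.divisors.erase 1 := by
        ext k
        simp only [mem_filter, Finset.mem_erase, Nat.mem_divisors]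
        constructor
        · rintro ⟨⟨hdvd, _⟩, h2⟩
          exact ⟨by omega, hdvd, hs0⟩
        · rintro ⟨hne, hdvd, _⟩
          have : 1 ≤ k := Nat.pos_of_dvd_of_pos hdvd (by omega)
          exact ⟨⟨hdvd, hs0⟩, by omega⟩
      rw [hfe]
      have h1s : (1 : ℕ) ∈ s.divisors := Nat.one_mem_divisors.mpr hs0
      have hsplit : (μ (α * 1) : ℤ) + ∑ x ∈ s.divisors.erase 1, (μ (α * x) : ℤ)
          = if ∃ a, s = α ^ a then (-1 : ℤ) else 0 := by
        have h := Finset.add_sum_erase s.divisors (fun k => (μ (α * k) : ℤ)) h1s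
        rw [moebius_div_sum α hα s hs0] at h
        exact h
      have hμ1 : (μ (α * 1) : ℤ) = -1 := by rw [mul_one, moebius_apply_prime hα]
      rw [hμ1] at hsplit
      linarith
    have step5 : ∑ s ∈ Icc 2 N, (q (N - s) : ℤ) = (p n : ℤ) := by
      have hre : ∑ s ∈ Icc 2 N, (q (N - s) : ℤ) = ∑ i ∈ range (n + 1), (q i : ℤ) := by
        apply Finset.sum_bij' (i := fun s _ => N - s) (j := fun i _ => N - i)
        · intro s hs
          simp only [mem_Icc] at hs
          simp only [mem_range]
          omega
        · intro i hi
          simp only [mem_range] at hi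
          simp only [mem_Icc]
          omega
        · intro s hs
          simp only [mem_Icc] at hs
          omega
        · intro i hi
          simp only [mem_range] at hi
          omega
        · intro s hs
          rfl
      rw [hre, p_eq_sum_range n]
      push_cast
      ring
    have step6 : ∑ s ∈ Icc 2 N, (if ∃ a, s = α ^ a then (q (N - s) : ℤ) else 0) = T := by
      rw [hT, ← Finset.sum_filter, ← Finset.sum_filter]
      refine (Finset.sum_bij (fun j _ => α ^ j) ?_ ?_ ?_ ?_).symm
      · intro j hj
        simp only [mem_filter, mem_Icc] at hj
        obtain ⟨⟨hj1, hjn⟩, hjN⟩ := hj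
        simp only [mem_filter, mem_Icc]
        refine ⟨⟨?_, hjN⟩, j, rfl⟩
        calc 2 ≤ α := hα2
        _ ≤ α ^ j := Nat.le_self_pow (by omega) α
      · intro j1 h1 j2 h2 heq
        exact Nat.pow_right_injective hα2 heq
      · intro s hs
        simp only [mem_filter, mem_Icc] at hs
        obtain ⟨⟨hs2, hsN⟩, a, rfl⟩ := hs
        have ha1 : 1 ≤ a := by
          by_contra h
          interval_cases a
          simp at hs2
        have ha2 : a ≤ n + 1 := by
          have h1 : a < 2 ^ a := Nat.lt_two_pow_self (n := a)
          have h2 : 2 ^ a ≤ α ^ a := Nat.pow_le_pow_left hα2 a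
          omega
        exact ⟨a, by simp only [mem_filter, mem_Icc]; exact ⟨⟨ha1, ha2⟩, hsN⟩, rfl⟩
      · intro j hj
        rfl
    rw [step1, ← step2, step3, Finset.sum_sigma]
    have : ∀ s ∈ Icc 2 N, ∑ k ∈ s.divisors.filter (fun k => 2 ≤ k),
        (q (N - s) : ℤ) * μ (α * k) = (q (N - s) : ℤ) * ((if ∃ a, s = α ^ a then (-1:ℤ) else 0) + 1) := by
      intro s hs
      rw [← Finset.mul_sum, step4 s hs]
    rw [Finset.sum_congr rfl this]
    have expand : ∀ s ∈ Icc 2 N, (q (N - s) : ℤ) * ((if ∃ a, s = α ^ a then (-1:ℤ) else 0) + 1)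
        = (q (N - s) : ℤ) - (if ∃ a, s = α ^ a then (q (N - s) : ℤ) else 0) := by
      intro s _
      split_ifs <;> ring
    rw [Finset.sum_congr rfl expand, Finset.sum_sub_distrib, step5, step6]
  -- RHS computation
  have key : ∀ j : ℕ, pz ((n : ℤ) + 2 - (α : ℤ) ^ j) - pz ((n : ℤ) + 1 - (α : ℤ) ^ j)
      = (if α ^ j ≤ N then (q (N - α ^ j) : ℤ) else 0) := by
    intro j
    have hcast : (α : ℤ) ^ j = ((α ^ j : ℕ) : ℤ) := by push_cast; ring
    by_cases hle : α ^ j ≤ N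
    · rw [if_pos hle]
      have e1 : (n : ℤ) + 2 - (α : ℤ) ^ j = ((N - α ^ j : ℕ) : ℤ) := by
        rw [hcast]; push_cast [hle]; omega
      have e2 : (n : ℤ) + 1 - (α : ℤ) ^ j = ((N - α ^ j : ℕ) : ℤ) - 1 := by
        rw [hcast]; push_cast [hle]; omega
      rw [e1, e2, pz_sub]
    · rw [if_neg hle]
      have h1 : (n : ℤ) + 2 - (α : ℤ) ^ j < 0 := by
        rw [hcast]; omega
      simp only [pz]
      rw [if_neg (by omega), if_neg (by omega)]
      ring
  have hRHS : ∑ j ∈ Finset.range (n + 2),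
      (pz ((n : ℤ) + 1 - (α : ℤ) ^ j) - pz ((n : ℤ) + 2 - (α : ℤ) ^ (j + 1)))
      = (p n : ℤ) - T := by
    set A : ℕ → ℤ := fun j => pz ((n : ℤ) + 1 - (α : ℤ) ^ j) with hA
    set B : ℕ → ℤ := fun j => pz ((n : ℤ) + 2 - (α : ℤ) ^ j) with hB
    have hsplit : ∑ j ∈ Finset.range (n + 2), (A j - B (j + 1))
        = ∑ j ∈ Finset.range (n + 2), A j - ∑ j ∈ Finset.range (n + 2), B (j + 1) :=
      Finset.sum_sub_distrib _ _
    have hA0 : A 0 = (p n : ℤ) := by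
      rw [hA]
      simp only [pow_zero]
      have : (n : ℤ) + 1 - 1 = (n : ℤ) := by ring
      rw [this]
      simp only [pz]
      rw [if_pos (by positivity)]
      simp
    have hBlast : B (n + 2) = 0 := by
      rw [hB]
      have hcast : (α : ℤ) ^ (n+2) = ((α ^ (n+2) : ℕ) : ℤ) := by push_cast; ring
      have h1 : n + 2 < 2 ^ (n + 2) := Nat.lt_two_pow_self (n := n + 2)
      have h2 : 2 ^ (n + 2) ≤ α ^ (n + 2) := Nat.pow_le_pow_left hα2 (n + 2)
      simp only [pz]
      rw [if_neg (by rw [hcast]; omega)]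
    have hAsum : ∑ j ∈ Finset.range (n + 2), A j = A 0 + ∑ i ∈ Finset.range (n + 1), A (i + 1) := by
      rw [Finset.sum_range_succ']
      ring
    have hBsum : ∑ j ∈ Finset.range (n + 2), B (j + 1)
        = ∑ i ∈ Finset.range (n + 1), B (i + 1) + B (n + 2) := Finset.sum_range_succ _ _
    have hTre : T = ∑ i ∈ Finset.range (n + 1), (B (i + 1) - A (i + 1)) := by
      have : ∀ i ∈ Finset.range (n + 1), B (i + 1) - A (i + 1)
          = (if α ^ (i+1) ≤ N then (q (N - α ^ (i+1)) : ℤ) else 0) := fun i _ => key (i + 1)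
      rw [Finset.sum_congr rfl this, hT]
      refine Finset.sum_bij' (fun j _ => j - 1) (fun i _ => i + 1) ?_ ?_ ?_ ?_ ?_
      · intro j hj
        simp only [mem_Icc] at hj
        simp only [mem_range]
        omega
      · intro i hi
        simp only [mem_range] at hi
        simp only [mem_Icc]
        omega
      · intro j hj
        simp only [mem_Icc] at hj
        show j - 1 + 1 = j
        omega
      · intro i hi
        show i + 1 - 1 = i
        omega
      · intro j hj
        simp only [mem_Icc] at hj
        have h : j - 1 + 1 = j := by omega
        show (if α ^ j ≤ N then (q (N - α ^ j) : ℤ) else 0)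
          = (if α ^ (j - 1 + 1) ≤ N then (q (N - α ^ (j - 1 + 1)) : ℤ) else 0)
        rw [h]
    rw [hsplit, hAsum, hBsum, hA0, hBlast, hTre, Finset.sum_sub_distrib]
    ring
  rw [hLHS, hRHS]
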